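/- With M̃(n) as defined, det M̃(n) = 4·det M̃(n−1) + 1 for all n ≥ 2. -/

import Mathlib

open Matrix Finset

/-- Vandermonde-type identity: `∑ k ≤ i, C(i,k) C(j,k) = C(i+j, i)`. -/
lemma sum_choose_mul_choose (i j : ℕ) :
    ∑ k ∈ range (i + 1), i.choose k * j.choose k = (i + j).choose i := by
  rw [Nat.add_choose_eq i j i, Finset.Nat.sum_antidiagonal_eq_sum_range_succ
    (f := fun a b => i.choose a * j.choose b)]
  rw [← Finset.sum_range_reflect]
  refine Finset.sum_congr rfl fun k hk => ?_
  simp only [Finset.mem_range] at hk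
  have hk' : k ≤ i := by omega
  have h1 : i + 1 - 1 - k = i - k := by omega
  rw [h1, Nat.choose_symm hk']

lemma sum_choose_mul_choose' (m i j : ℕ) (hi : i < m) :
    ∑ k ∈ range m, i.choose k * j.choose k = (i + j).choose i := by
  rw [← sum_choose_mul_choose i j]
  symm
  apply Finset.sum_subset
  · intro x hx; simp only [mem_range] at *; omega
  · intro x _ hx
    simp only [mem_range, not_lt] at hx
    rw [Nat.choose_eq_zero_of_lt (by omega), zero_mul]

/-- The Pascal matrix. -/
def pascalM (m : ℕ) : Matrix (Fin m) (Fin m) ℤ :=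
  Matrix.of fun i j => (((i : ℕ) + (j : ℕ)).choose (i : ℕ) : ℤ)

def lowB (m : ℕ) : Matrix (Fin m) (Fin m) ℤ :=
  Matrix.of fun i j => ((i : ℕ).choose (j : ℕ) : ℤ)

lemma lowB_mul_transpose (m : ℕ) : lowB m * (lowB m)ᵀ = pascalM m := by
  ext i j
  simp only [Matrix.mul_apply, lowB, pascalM, transpose_apply, of_apply]
  push_cast [← sum_choose_mul_choose' m i j i.isLt]
  rw [Fin.sum_univ_eq_sum_range (fun k => ((i:ℕ).choose k * (j:ℕ).choose k : ℤ))]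

lemma det_lowB (m : ℕ) : (lowB m).det = 1 := by
  rw [Matrix.det_of_lowerTriangular (lowB m)]
  · simp [lowB]
  · intro i j h
    simp only [OrderDual.toDual_lt_toDual] at h
    simp only [lowB, of_apply]
    rw [Nat.choose_eq_zero_of_lt (by exact_mod_cast h)]
    simp

lemma det_pascalM (m : ℕ) : (pascalM m).det = 1 := by
  rw [← lowB_mul_transpose, Matrix.det_mul, Matrix.det_transpose, det_lowB, mul_one]

/-- The bordered binomial matrix `M̃(n)`. -/
def Mtilde (n : ℕ) : Matrix (Fin (n + 1)) (Fin (n + 1)) ℤ :=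
  Matrix.of fun i j =>
    if (i : ℕ) = 0 then (if (j : ℕ) = 0 then 0 else (-1) ^ ((j : ℕ) + 1))
    else if (j : ℕ) = 0 then (-1) ^ (i : ℕ)
    else ((((i : ℕ) - 1) + ((j : ℕ) - 1)).choose ((i : ℕ) - 1) : ℤ)

/-- The row-difference matrix `N`. -/
def Nm (m : ℕ) : Matrix (Fin (m+3)) (Fin (m+3)) ℤ :=
  Matrix.of fun i j => if (j : ℕ) + 1 = (i : ℕ) ∧ 2 ≤ (i : ℕ) then 1 else 0

lemma Nm_mul_apply (m : ℕ) (A : Matrix (Fin (m+3)) (Fin (m+3)) ℤ) (i j : Fin (m+3)) :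
    (Nm m * A) i j = if h : 2 ≤ (i : ℕ) then A ⟨(i : ℕ) - 1, by omega⟩ j else 0 := by
  rw [Matrix.mul_apply]
  by_cases h : 2 ≤ (i : ℕ)
  · rw [dif_pos h, Finset.sum_eq_single (⟨(i : ℕ) - 1, by omega⟩ : Fin (m+3))]
    · simp only [Nm, of_apply]
      rw [if_pos ⟨Nat.succ_pred_eq_of_pos (n := (i : ℕ)) (by omega), h⟩, one_mul]
    · intro k _ hk
      simp only [Nm, of_apply]
      rw [if_neg, zero_mul]
      rintro ⟨h1, -⟩
      exact hk (Fin.ext (show (k : ℕ) = (i : ℕ) - 1 by omega))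
    · intro hmem; exact absurd (Finset.mem_univ _) hmem
  · rw [dif_neg h]
    apply Finset.sum_eq_zero
    intro k _
    simp only [Nm, of_apply]
    rw [if_neg (by tauto), zero_mul]

lemma mul_Nm_transpose_apply (m : ℕ) (A : Matrix (Fin (m+3)) (Fin (m+3)) ℤ) (i j : Fin (m+3)) :
    (A * (Nm m)ᵀ) i j = if h : 2 ≤ (j : ℕ) then A i ⟨(j : ℕ) - 1, by omega⟩ else 0 := by
  rw [Matrix.mul_apply]
  by_cases h : 2 ≤ (j : ℕ)
  · rw [dif_pos h, Finset.sum_eq_single (⟨(j : ℕ) - 1, by omega⟩ : Fin (m+3))]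
    · simp only [Nm, transpose_apply, of_apply]
      rw [if_pos ⟨Nat.succ_pred_eq_of_pos (n := (j : ℕ)) (by omega), h⟩, mul_one]
    · intro k _ hk
      simp only [Nm, transpose_apply, of_apply]
      rw [if_neg, mul_zero]
      rintro ⟨h1, -⟩
      exact hk (Fin.ext (show (k : ℕ) = (j : ℕ) - 1 by omega))
    · intro hmem; exact absurd (Finset.mem_univ _) hmem
  · rw [dif_neg h]
    apply Finset.sum_eq_zero
    intro k _
    simp only [Nm, transpose_apply, of_apply]
    rw [if_neg (by tauto), mul_zero]

lemma det_one_sub_Nm (m : ℕ) : ((1 : Matrix (Fin (m+3)) (Fin (m+3)) ℤ) - Nm m).det = 1 := by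
  rw [Matrix.det_of_lowerTriangular]
  · have : ∀ i : Fin (m+3), ((1 : Matrix (Fin (m+3)) (Fin (m+3)) ℤ) - Nm m) i i = 1 := by
      intro i
      simp only [Matrix.sub_apply, Matrix.one_apply_eq, Nm, of_apply]
      rw [if_neg (by omega)]
      ring
    simp [this]
  · intro i j h
    simp only [OrderDual.toDual_lt_toDual] at h
    have hij : (i : ℕ) < (j : ℕ) := h
    simp only [Matrix.sub_apply, Nm, of_apply]
    rw [Matrix.one_apply_ne (by exact fun e => absurd e (by exact fun e => by subst e; omega)),
      if_neg (by omega)]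
    ring

theorem det_Mtilde_rec_aux (m : ℕ) :
    (Mtilde (m+2)).det = 4 * (Mtilde (m+1)).det + 1 := by
  set M := Mtilde (m+2) with hM
  set L : Matrix (Fin (m+3)) (Fin (m+3)) ℤ := 1 - Nm m with hL
  set B : Matrix (Fin (m+3)) (Fin (m+3)) ℤ := L * M * Lᵀ with hB
  -- determinant preserved
  have hdetB : B.det = M.det := by
    rw [hB, Matrix.det_mul, Matrix.det_mul, Matrix.det_transpose, det_one_sub_Nm, one_mul, mul_one]
  -- B entry formula
  have hBapp : ∀ i j : Fin (m+3), B i j =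
      M i j - (if h : 2 ≤ (i : ℕ) then M ⟨(i:ℕ)-1, by omega⟩ j else 0)
            - (if h : 2 ≤ (j : ℕ) then M i ⟨(j:ℕ)-1, by omega⟩ else 0)
            + (if h : 2 ≤ (i : ℕ) ∧ 2 ≤ (j : ℕ) then
                 M ⟨(i:ℕ)-1, by omega⟩ ⟨(j:ℕ)-1, by omega⟩ else 0) := by
    intro i j
    have hexp : B = M - Nm m * M - M * (Nm m)ᵀ + Nm m * M * (Nm m)ᵀ := by
      rw [hB, hL, Matrix.transpose_sub, Matrix.transpose_one]
      noncomm_ring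
    rw [hexp]
    simp only [Matrix.add_apply, Matrix.sub_apply]
    simp only [Nm_mul_apply, mul_Nm_transpose_apply]
    by_cases hi : 2 ≤ (i : ℕ) <;> by_cases hj : 2 ≤ (j : ℕ) <;>
      simp [hi, hj]
  -- column 1 of M is all ones
  have hMcol1 : ∀ i : Fin (m+3), M i (1 : Fin (m+3)) = 1 := by
    intro i
    simp only [hM, Mtilde, of_apply, Fin.val_one]
    by_cases h : (i : ℕ) = 0
    · rw [if_pos h]; norm_num
    · rw [if_neg h]
      simp
  have hBcol1 : ∀ i : Fin (m+3), B i (1 : Fin (m+3)) = if 2 ≤ (i : ℕ) then 0 else 1 := by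
    intro i
    rw [hBapp]
    rw [dif_neg (show ¬(2 ≤ ((1 : Fin (m+3)) : ℕ)) by simp),
      dif_neg (show ¬(2 ≤ (i:ℕ) ∧ 2 ≤ ((1 : Fin (m+3)) : ℕ)) by simp)]
    by_cases h : 2 ≤ (i : ℕ)
    · rw [dif_pos h, if_pos h, hMcol1, hMcol1]; ring
    · rw [dif_neg h, if_neg h, hMcol1]; ring
  set B' : Matrix (Fin (m+3)) (Fin (m+3)) ℤ := updateRow B 0 (B 0 + (-1 : ℤ) • B 1) with hB'
  have h01 : (0 : Fin (m+3)) ≠ 1 := Fin.ne_of_val_ne (by simp)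
  have hdetB' : B'.det = B.det := Matrix.det_updateRow_add_smul_self B h01 (-1)
  have hB'col1 : ∀ i : Fin (m+3), B' i (1 : Fin (m+3)) = if i = 1 then 1 else 0 := by
    intro i
    by_cases h0 : i = 0
    · subst h0
      rw [hB', Matrix.updateRow_self]
      simp only [Pi.add_apply, Pi.smul_apply, smul_eq_mul]
      rw [hBcol1, hBcol1, if_neg h01]
      norm_num
    · rw [hB', Matrix.updateRow_ne h0, hBcol1]
      by_cases h1 : i = 1
      · subst h1; simp
      · rw [if_pos, if_neg h1]
        have e0 : (i : ℕ) ≠ 0 := fun e => h0 (Fin.ext (by simpa using e))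
        have e1 : (i : ℕ) ≠ 1 := fun e => h1 (Fin.ext (by simpa using e))
        omega
  have hdetC : B'.det
      = (B'.submatrix ((1 : Fin (m+3)).succAbove) ((1 : Fin (m+3)).succAbove)).det := by
    rw [Matrix.det_succ_column B' 1, Finset.sum_eq_single (1 : Fin (m+3))]
    · rw [hB'col1, if_pos rfl, Fin.val_one]
      norm_num
    · intro k _ hk; rw [hB'col1, if_neg hk]; ring
    · intro h; exact absurd (Finset.mem_univ _) h
  have hsig : ∀ k : Fin (m+2), (((1 : Fin (m+3)).succAbove k) : ℕ)
      = if (k : ℕ) = 0 then 0 else (k : ℕ) + 1 := by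
    intro k
    unfold Fin.succAbove
    have hlt : (Fin.castSucc k < (1 : Fin (m+3))) ↔ (k : ℕ) < 1 := by
      rw [Fin.lt_def]; simp
    by_cases h : (k : ℕ) = 0
    · rw [if_pos (hlt.mpr (by omega)), if_pos h]
      simpa using h
    · rw [if_neg (fun hh => h (Nat.lt_one_iff.mp (hlt.mp hh))), if_neg h]
      simp
  set M' := Mtilde (m+1) with hM'
  set d : Matrix (Fin (m+2)) (Fin (m+2)) ℤ := diagonal (fun k => if k = 0 then (-2 : ℤ) else 1)
    with hd
  set D : Matrix (Fin (m+2)) (Fin (m+2)) ℤ := d * M' * d with hD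
  have hDapp : ∀ i j : Fin (m+2),
      D i j = (if i = 0 then (-2:ℤ) else 1) * M' i j * (if j = 0 then (-2:ℤ) else 1) := by
    intro i j
    rw [hD, Matrix.mul_diagonal, Matrix.diagonal_mul]
  have hs0 : (1 : Fin (m+3)).succAbove ⟨0, by omega⟩ = (0 : Fin (m+3)) :=
    Fin.ext (by rw [hsig]; simp)
  have hsS : ∀ (a : ℕ) (ha : a + 1 < m + 2),
      (1 : Fin (m+3)).succAbove ⟨a+1, ha⟩ = ⟨a+2, by omega⟩ := by
    intro a ha
    refine Fin.ext ?_
    rw [hsig]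
    simp
  have h0e3 : (0 : Fin (m+3)) = ⟨0, by omega⟩ := Fin.ext (by simp)
  have h1e3 : (1 : Fin (m+3)) = ⟨1, by omega⟩ := Fin.ext (by simp)
  have h0e2 : (0 : Fin (m+2)) = ⟨0, by omega⟩ := Fin.ext (by simp)
  have hMmk : ∀ (iv jv : ℕ) (hi : iv < m+3) (hj : jv < m+3), M ⟨iv, hi⟩ ⟨jv, hj⟩ =
      (if iv = 0 then (if jv = 0 then 0 else (-1) ^ (jv + 1))
       else if jv = 0 then (-1) ^ iv
       else (((iv - 1) + (jv - 1)).choose (iv - 1) : ℤ)) := fun _ _ _ _ => rfl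
  have hM'mk : ∀ (iv jv : ℕ) (hi : iv < m+2) (hj : jv < m+2), M' ⟨iv, hi⟩ ⟨jv, hj⟩ =
      (if iv = 0 then (if jv = 0 then 0 else (-1) ^ (jv + 1))
       else if jv = 0 then (-1) ^ iv
       else (((iv - 1) + (jv - 1)).choose (iv - 1) : ℤ)) := fun _ _ _ _ => rfl
  have hBmk : ∀ (iv jv : ℕ) (hi : iv < m+3) (hj : jv < m+3), B ⟨iv, hi⟩ ⟨jv, hj⟩ =
      M ⟨iv, hi⟩ ⟨jv, hj⟩ - (if h : 2 ≤ iv then M ⟨iv - 1, by omega⟩ ⟨jv, hj⟩ else 0)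
        - (if h : 2 ≤ jv then M ⟨iv, hi⟩ ⟨jv - 1, by omega⟩ else 0)
        + (if h : 2 ≤ iv ∧ 2 ≤ jv then M ⟨iv - 1, by omega⟩ ⟨jv - 1, by omega⟩ else 0) :=
    fun iv jv hi hj => hBapp ⟨iv, hi⟩ ⟨jv, hj⟩
  have hC : B'.submatrix ((1 : Fin (m+3)).succAbove) ((1 : Fin (m+3)).succAbove)
      = updateRow D 0 (D 0 + Pi.single 0 1) := by
    ext ⟨iv, hi⟩ ⟨jv, hj⟩
    rw [Matrix.submatrix_apply, hB', Matrix.updateRow_apply, Matrix.updateRow_apply]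
    rcases iv with _ | a <;> rcases jv with _ | b
    · rw [hs0, if_pos rfl, if_pos (show (⟨0, hi⟩ : Fin (m+2)) = 0 from Fin.ext (by simp))]
      simp only [Pi.add_apply, Pi.smul_apply, smul_eq_mul, Pi.single_apply]
      simp [hBapp, hDapp, hM, hM', Mtilde, Fin.ext_iff, -Fin.val_eq_zero_iff]
    · rw [hs0, hsS b hj, if_pos rfl,
        if_pos (show (⟨0, hi⟩ : Fin (m+2)) = 0 from Fin.ext (by simp))]
      simp only [Pi.add_apply, Pi.smul_apply, smul_eq_mul, Pi.single_apply]
      simp [hBapp, hDapp, hM, hM', Mtilde, Fin.ext_iff, -Fin.val_eq_zero_iff]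
      ring
    · rw [hsS a hi, hs0,
        if_neg (show ¬(⟨a+2, by omega⟩ : Fin (m+3)) = 0 by simp [Fin.ext_iff]),
        if_neg (show ¬(⟨a+1, hi⟩ : Fin (m+2)) = 0 by simp [Fin.ext_iff])]
      simp [hBapp, hDapp, hM, hM', Mtilde, Fin.ext_iff, -Fin.val_eq_zero_iff]
      ring
    · rw [hsS a hi, hsS b hj,
        if_neg (show ¬(⟨a+2, by omega⟩ : Fin (m+3)) = 0 by simp [Fin.ext_iff]),
        if_neg (show ¬(⟨a+1, hi⟩ : Fin (m+2)) = 0 by simp [Fin.ext_iff])]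
      simp [hBapp, hDapp, hM, hM', Mtilde, Fin.ext_iff, -Fin.val_eq_zero_iff]
      have key : (a + b + 2).choose (a+1) = (a + b + 1).choose a + (a + b + 1).choose (a+1) :=
        Nat.choose_succ_succ' (a+b+1) a
      have e1 : a + 1 + (b + 1) = a + b + 2 := by ring
      have e2 : a + (b + 1) = a + b + 1 := by ring
      have e3 : a + 1 + b = a + b + 1 := by ring
      rw [e1, e2, e3, key]
      push_cast
      ring
  have hdetD : D.det = 4 * M'.det := by
    rw [hD, hd, Matrix.det_mul, Matrix.det_mul, Matrix.det_diagonal]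
    have hprod : (∏ k : Fin (m+2), (if k = 0 then (-2:ℤ) else 1)) = -2 := by
      simp [Finset.prod_ite_eq']
    rw [hprod]
    ring
  have hdetE : (updateRow D 0 (Pi.single 0 1)).det = 1 := by
    have hsub : (updateRow D 0 (Pi.single 0 1)).submatrix
        ((0 : Fin (m+2)).succAbove) ((0 : Fin (m+2)).succAbove) = pascalM (m+1) := by
      ext i j
      rw [Matrix.submatrix_apply, Fin.zero_succAbove, Fin.zero_succAbove,
        Matrix.updateRow_ne (Fin.succ_ne_zero i), hDapp]
      rw [if_neg (Fin.succ_ne_zero i), if_neg (Fin.succ_ne_zero j), one_mul, mul_one]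
      simp [hM', Mtilde, pascalM, Fin.val_succ]
    rw [Matrix.det_succ_row _ 0, Finset.sum_eq_single (0 : Fin (m+2))]
    · rw [hsub, det_pascalM, Matrix.updateRow_self]
      simp [Pi.single_apply]
    · intro k _ hk
      rw [Matrix.updateRow_self]
      simp [Pi.single_apply, hk]
    · intro h; exact absurd (Finset.mem_univ _) h
  have hfin : M.det = (updateRow D 0 (D 0 + Pi.single 0 1)).det := by
    rw [← hdetB, ← hdetB', hdetC, hC]
  rw [hfin, Matrix.det_updateRow_add, Matrix.updateRow_eq_self, hdetD, hdetE]

theorem det_Mtilde_recurrence (n : ℕ) (hn : 2 ≤ n) :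
    (Mtilde n).det = 4 * (Mtilde (n - 1)).det + 1 := by
  obtain ⟨m, rfl⟩ : ∃ m, n = m + 2 := ⟨n - 2, by omega⟩
  exact det_Mtilde_rec_aux m
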